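/- If R has only trivial idempotents and n ≥ 3, then the ring D_n(R) of upper triangular matrices with constant diagonal has only trivial idempotents (its only idempotents are 0 and the identity matrix). -/

import Mathlib

/-- A ring is *i-reversible* if whenever `a * b` is a non-zero idempotent, `b * a` is an
idempotent. -/
def IsIReversible (S : Type*) [Ring S] : Prop :=
  ∀ a b : S, IsIdempotentElem (a * b) → a * b ≠ 0 → IsIdempotentElem (b * a)

/-- A ring is *reversible* if `a * b = 0` implies `b * a = 0`. -/
def IsReversible (S : Type*) [Ring S] : Prop :=
  ∀ a b : S, a * b = 0 → b * a = 0

/-- A ring has only trivial idempotents if its only idempotents are `0` and `1`. -/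
def HasOnlyTrivialIdempotents (S : Type*) [Ring S] : Prop :=
  ∀ e : S, IsIdempotentElem e → e = 0 ∨ e = 1

/-- Upper triangular predicate for square matrices. -/
def Matrix.IsUpperTri {n : ℕ} {R : Type*} [Zero R] (A : Matrix (Fin n) (Fin n) R) : Prop :=
  ∀ ⦃i j : Fin n⦄, j < i → A i j = 0

lemma Matrix.IsUpperTri.mul {n : ℕ} {R : Type*} [Ring R]
    {A B : Matrix (Fin n) (Fin n) R} (hA : A.IsUpperTri) (hB : B.IsUpperTri) :
    (A * B).IsUpperTri := by
  intro i j h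
  rw [Matrix.mul_apply]
  refine Finset.sum_eq_zero fun k _ => ?_
  rcases lt_or_ge k i with hk | hk
  · rw [hA hk, zero_mul]
  · rw [hB (lt_of_lt_of_le h hk), mul_zero]

/-- The ring `T_n(R)` of upper triangular `n × n` matrices, as a subring of the matrix ring. -/
def triangularRing (n : ℕ) (R : Type*) [Ring R] :
    Subring (Matrix (Fin n) (Fin n) R) where
  carrier := {A | A.IsUpperTri}
  mul_mem' ha hb := ha.mul hb
  one_mem' := fun i j h => by simp [Matrix.one_apply, (ne_of_lt h).symm]
  add_mem' ha hb := fun i j h => by simp [Matrix.add_apply, ha h, hb h]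
  zero_mem' := fun i j h => rfl
  neg_mem' ha := fun i j h => by simp [ha h]

lemma diag_mul_upperTri {n : ℕ} {R : Type*} [Ring R]
    {A B : Matrix (Fin n) (Fin n) R} (hA : A.IsUpperTri)
    (hB : B.IsUpperTri) (i : Fin n) : (A * B) i i = A i i * B i i := by
  rw [Matrix.mul_apply]
  refine Finset.sum_eq_single i (fun k _ hk => ?_) (by simp)
  rcases lt_or_gt_of_ne hk with h | h
  · rw [hA h, zero_mul]
  · rw [hB h, mul_zero]

/-- The ring `D_n(R)` of upper triangular `n × n` matrices with constant diagonal. -/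
def constDiagRing (n : ℕ) (R : Type*) [Ring R] :
    Subring (Matrix (Fin n) (Fin n) R) where
  carrier := {A | A.IsUpperTri ∧ ∀ i j : Fin n, A i i = A j j}
  mul_mem' := by
    rintro A B ⟨hA, hA'⟩ ⟨hB, hB'⟩
    refine ⟨hA.mul hB, fun i j => ?_⟩
    rw [diag_mul_upperTri hA hB, diag_mul_upperTri hA hB, hA' i j, hB' i j]
  one_mem' := ⟨fun i j h => by simp [Matrix.one_apply, (ne_of_lt h).symm], by simp⟩
  add_mem' := by
    rintro A B ⟨hA, hA'⟩ ⟨hB, hB'⟩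
    exact ⟨fun i j h => by simp [Matrix.add_apply, hA h, hB h],
      fun i j => by simp [Matrix.add_apply, hA' i j, hB' i j]⟩
  zero_mem' := ⟨fun i j h => rfl, by simp⟩
  neg_mem' := by
    rintro A ⟨hA, hA'⟩
    exact ⟨fun i j h => by simp [hA h], fun i j => by simp [hA' i j]⟩

lemma strict_pow_zero {n : ℕ} {R : Type*} [Ring R] (A : Matrix (Fin n) (Fin n) R)
    (hA : ∀ i j : Fin n, (j : ℕ) ≤ i → A i j = 0) :
    ∀ k : ℕ, ∀ i j : Fin n, (j : ℕ) < (i : ℕ) + k → (A ^ k) i j = 0 := by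
  intro k
  induction k with
  | zero =>
    intro i j hij
    simp only [pow_zero, Matrix.one_apply]
    rw [if_neg]
    rintro rfl; omega
  | succ k ih =>
    intro i j hij
    rw [pow_succ', Matrix.mul_apply]
    refine Finset.sum_eq_zero fun l _ => ?_
    rcases le_or_gt (l : ℕ) (i : ℕ) with hl | hl
    · rw [hA i l hl, zero_mul]
    · rw [ih l j (by omega), mul_zero]

lemma strict_idem_zero {n : ℕ} {R : Type*} [Ring R] (A : Matrix (Fin n) (Fin n) R)
    (hA : ∀ i j : Fin n, (j : ℕ) ≤ i → A i j = 0) (hidem : A * A = A) : A = 0 := by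
  have hpow : ∀ k : ℕ, A ^ (k + 1) = A := by
    intro k
    induction k with
    | zero => simp
    | succ k ih => rw [pow_succ, ih, hidem]
  have : A ^ (n + 1) = A := hpow n
  rw [← this]
  ext i j
  exact strict_pow_zero A hA (n + 1) i j (by omega)

/-- If `R` has only trivial idempotents and `n ≥ 3`, then `D_n(R)` has only trivial
idempotents. -/
theorem constDiagRing_hasOnlyTrivialIdempotents (R : Type*) [Ring R] (n : ℕ) (hn : 3 ≤ n)
    (h : HasOnlyTrivialIdempotents R) :
    HasOnlyTrivialIdempotents (constDiagRing n R) := by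
  rintro ⟨E, hEut, hEcd⟩ hidem
  have i0 : Fin n := ⟨0, by omega⟩
  have hmul : E * E = E := congrArg Subtype.val hidem
  have hdiag : E i0 i0 * E i0 i0 = E i0 i0 := by
    have := diag_mul_upperTri hEut hEut i0
    rw [hmul] at this
    exact this.symm
  rcases h (E i0 i0) hdiag with ha | ha
  · left
    have : E = 0 := by
      refine strict_idem_zero E (fun i j hij => ?_) hmul
      rcases eq_or_lt_of_le hij with heq | hlt
      · have : j = i := Fin.ext heq
        rw [this, hEcd i i0, ha]
      · exact hEut (by exact hlt)
    exact Subtype.ext this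
  · right
    have hF : (1 - E) * (1 - E) = 1 - E := by
      simp only [mul_sub, sub_mul, mul_one, one_mul, hmul]
      abel
    have hFut : (1 - E : Matrix (Fin n) (Fin n) R).IsUpperTri := fun i j hij => by
      simp [Matrix.sub_apply, Matrix.one_apply, (ne_of_lt hij).symm, hEut hij]
    have : (1 - E : Matrix (Fin n) (Fin n) R) = 0 := by
      refine strict_idem_zero _ (fun i j hij => ?_) hF
      rcases eq_or_lt_of_le hij with heq | hlt
      · have hji : j = i := Fin.ext heq
        subst hji
        simp [Matrix.sub_apply, Matrix.one_apply, hEcd j i0, ha]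
      · exact hFut hlt
    exact Subtype.ext (sub_eq_zero.mp this).symm
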